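/- Gaussian tail comparison: for any A > 0 there exist c and ε > 0 such that for σ√n ≤ z ≤ εn, e^{A z³/n²} Φ̄(z/(σ√n)) ≤ Φ̄(z/(σ√n) - c z²/(σ n^{3/2})) and e^{-A z³/n²} Φ̄(z/(σ√n)) ≥ Φ̄(z/(σ√n) + c z²/(σ n^{3/2})), where Φ̄ = 1 - Φ is the standard normal upper tail. -/

import Mathlib

open MeasureTheory ProbabilityTheory Real Set Filter

/-- The standard normal upper tail `Φ̄(s) = 1 - Φ(s)`. -/
noncomputable def Phibar (s : ℝ) : ℝ := ((gaussianReal 0 1) (Set.Ioi s)).toReal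

noncomputable def phi (x : ℝ) : ℝ := (Real.sqrt (2*Real.pi))⁻¹ * Real.exp (-x^2/2)

lemma phi_eq : phi = gaussianPDFReal 0 1 := by
  funext x
  simp [phi, gaussianPDFReal]

lemma phi_pos (x : ℝ) : 0 < phi x := by
  exact mul_pos (inv_pos.2 (Real.sqrt_pos.2 (by positivity))) (Real.exp_pos _)

lemma phi_anti {a b : ℝ} (ha : 0 ≤ a) (hab : a ≤ b) : phi b ≤ phi a := by
  unfold phi
  have : 0 < Real.sqrt (2*Real.pi) := Real.sqrt_pos.2 (by positivity)
  have h2 : Real.exp (-b^2/2) ≤ Real.exp (-a^2/2) := Real.exp_le_exp.2 (by nlinarith)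
  have h3 : (0:ℝ) ≤ (Real.sqrt (2*Real.pi))⁻¹ := by positivity
  exact mul_le_mul_of_nonneg_left h2 h3

lemma integrable_phi : Integrable phi := by
  rw [phi_eq]; exact integrable_gaussianPDFReal 0 1

lemma Phibar_eq (s : ℝ) : Phibar s = ∫ x in Set.Ioi s, phi x := by
  rw [Phibar, gaussianReal_apply_eq_integral 0 one_ne_zero, ENNReal.toReal_ofReal, phi_eq]
  rw [← phi_eq]
  exact setIntegral_nonneg measurableSet_Ioi (fun x _ => (phi_pos x).le)

lemma phi_hasDeriv (x : ℝ) : HasDerivAt phi (-x * phi x) x := by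
  have h1 : HasDerivAt (fun x : ℝ => -x^2/2) (-x) x := by
    have := ((hasDerivAt_pow 2 x).neg).div_const 2
    simpa using this.congr_deriv (by ring)
  have h2 := (Real.hasDerivAt_exp (-x^2/2)).comp x h1
  have h3 := h2.const_mul (Real.sqrt (2*Real.pi))⁻¹
  unfold phi
  exact h3.congr_deriv (by ring)

lemma integrableOn_phi_div_sq {s : ℝ} (hs : 0 < s) :
    IntegrableOn (fun x => phi x / x^2) (Set.Ioi s) := by
  have hint : IntegrableOn (fun x => phi x / s^2) (Set.Ioi s) :=
    (integrable_phi.div_const (s^2)).integrableOn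
  refine hint.mono' ?_ ?_
  · have mphi : Measurable phi := by rw [phi_eq]; exact measurable_gaussianPDFReal 0 1
    exact (mphi.div (measurable_id.pow_const 2)).aestronglyMeasurable
  · filter_upwards [ae_restrict_mem measurableSet_Ioi] with x hx
    have hx0 : 0 < x := hs.trans hx
    rw [Real.norm_eq_abs, abs_of_nonneg (div_nonneg (phi_pos x).le (sq_nonneg x))]
    have hsx : s ≤ x := (Set.mem_Ioi.1 hx).le
    exact div_le_div_of_nonneg_left (phi_pos x).le (by positivity) (by nlinarith)

lemma mills (s : ℝ) (hs : 0 < s) :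
    Phibar s + ∫ x in Set.Ioi s, phi x / x^2 = phi s / s := by
  have hderiv : ∀ x ∈ Set.Ici s, HasDerivAt (fun x => -phi x / x) (phi x + phi x / x^2) x := by
    intro x hx
    have hx0 : 0 < x := lt_of_lt_of_le hs hx
    have h1 : HasDerivAt (fun x : ℝ => -phi x) (x * phi x) x := by
      exact (phi_hasDeriv x).neg.congr_deriv (by ring)
    have h2 := h1.div (hasDerivAt_id x) hx0.ne'
    exact h2.congr_deriv (by simp only [id]; field_simp; ring)
  have hint : IntegrableOn (fun x => phi x + phi x / x^2) (Set.Ioi s) :=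
    integrable_phi.integrableOn.add (integrableOn_phi_div_sq hs)
  have htend : Tendsto (fun x => -phi x / x) atTop (nhds 0) := by
    have h1 : Tendsto phi atTop (nhds 0) := by
      have ht : Tendsto (fun x : ℝ => x^2) atTop atTop := tendsto_pow_atTop two_ne_zero
      have : Tendsto (fun x : ℝ => -x^2/2) atTop atBot := by
        apply Tendsto.atBot_div_const (by norm_num)
        exact tendsto_neg_atTop_atBot.comp ht
      have h2 := (Real.tendsto_exp_atBot).comp this
      have h3 := h2.const_mul (Real.sqrt (2*Real.pi))⁻¹
      unfold phi
      simpa [Function.comp] using h3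
    have h2 : Tendsto (fun x : ℝ => x⁻¹) atTop (nhds 0) := tendsto_inv_atTop_zero
    have := (h1.neg.mul h2)
    simpa [div_eq_mul_inv] using this
  have key := integral_Ioi_of_hasDerivAt_of_tendsto' hderiv hint htend
  rw [integral_add integrable_phi.integrableOn (integrableOn_phi_div_sq hs)] at key
  rw [Phibar_eq]
  rw [key]
  field_simp
  ring

lemma M1 {s : ℝ} (hs : 0 < s) : Phibar s ≤ phi s / s := by
  have h := mills s hs
  have h2 : 0 ≤ ∫ x in Set.Ioi s, phi x / x^2 :=
    setIntegral_nonneg measurableSet_Ioi (fun x hx =>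
      div_nonneg (phi_pos x).le (sq_nonneg x))
  linarith [phi_pos s]

lemma Phibar_nonneg (s : ℝ) : 0 ≤ Phibar s := ENNReal.toReal_nonneg

lemma M2 {s : ℝ} (hs : 0 < s) : s * phi s / (1 + s^2) ≤ Phibar s := by
  have h := mills s hs
  have h2 : (∫ x in Set.Ioi s, phi x / x^2) ≤ ∫ x in Set.Ioi s, phi x / s^2 := by
    refine setIntegral_mono_on (integrableOn_phi_div_sq hs)
      (integrable_phi.div_const (s^2)).integrableOn measurableSet_Ioi ?_
    intro x hx
    exact div_le_div_of_nonneg_left (phi_pos x).le (by positivity)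
      (by nlinarith [Set.mem_Ioi.1 hx])
  rw [integral_div, ← Phibar_eq] at h2
  have hP := Phibar_nonneg s
  have hs2 : 0 < s^2 := by positivity
  have this1 : phi s / s ≤ Phibar s + Phibar s / s^2 := by linarith
  rw [div_le_iff₀ hs] at this1
  rw [div_le_iff₀ (by positivity : (0:ℝ) < 1 + s^2)]
  have hps : Phibar s / s^2 * s^2 = Phibar s := div_mul_cancel₀ _ hs2.ne'
  nlinarith [mul_le_mul_of_nonneg_left this1 hs.le, hps]

lemma Phibar_diff {a b : ℝ} (hab : a ≤ b) :
    Phibar a = Phibar b + ∫ x in Set.Ioc a b, phi x := by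
  rw [Phibar_eq, Phibar_eq, ← Set.Ioc_union_Ioi_eq_Ioi hab,
    setIntegral_union (Set.Ioc_disjoint_Ioi le_rfl) measurableSet_Ioi
      integrable_phi.integrableOn integrable_phi.integrableOn]
  ring

lemma diff_lower {a b : ℝ} (ha : 0 ≤ a) (hab : a ≤ b) :
    (b - a) * phi b ≤ Phibar a - Phibar b := by
  rw [Phibar_diff hab]
  have h : phi b * (volume (Set.Ioc a b)).toReal ≤ ∫ x in Set.Ioc a b, phi x := by
    have := setIntegral_ge_of_const_le_real (s := Set.Ioc a b) (c := phi b) measurableSet_Ioc (by simp) ?_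
      integrable_phi.integrableOn
    · simpa [measureReal_def, smul_eq_mul, mul_comm] using this
    intro x hx
    exact phi_anti (le_trans ha hx.1.le) hx.2
  rw [Real.volume_Ioc, ENNReal.toReal_ofReal (by linarith)] at h
  linarith [mul_comm (phi b) (b - a)]

lemma lin_exp {v : ℝ} (h0 : 0 ≤ v) (h8 : v ≤ 8) : Real.exp (v/4) ≤ 1 + v := by
  have hc := convexOn_exp.2 (Set.mem_univ (0:ℝ)) (Set.mem_univ (2:ℝ))
    (show (0:ℝ) ≤ 1 - v/8 by linarith) (show (0:ℝ) ≤ v/8 by linarith)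
    (show (1 - v/8) + v/8 = 1 by ring)
  simp only [smul_eq_mul, mul_zero, zero_add, Real.exp_zero] at hc
  rw [show v/8 * 2 = v/4 by ring] at hc
  have h2 : Real.exp 2 ≤ 9 := by
    have h1 := Real.exp_one_lt_d9
    have : Real.exp 2 = Real.exp 1 * Real.exp 1 := by rw [← Real.exp_add]; norm_num
    nlinarith [Real.exp_pos 1]
  nlinarith

lemma phi_sub (s d : ℝ) : phi (s - d) = phi s * Real.exp (s*d - d^2/2) := by
  unfold phi
  rw [mul_assoc, ← Real.exp_add]
  ring_nf

lemma phi_add (s d : ℝ) : phi (s + d) = phi s * Real.exp (-(s*d) - d^2/2) := by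
  unfold phi
  rw [mul_assoc, ← Real.exp_add]
  ring_nf

lemma Phibar_pos {s : ℝ} (hs : 0 < s) : 0 < Phibar s :=
  lt_of_lt_of_le (div_pos (mul_pos hs (phi_pos s)) (by positivity)) (M2 hs)

lemma ratio_lower {s δ : ℝ} (hs : 1 ≤ s) (hδ0 : 0 ≤ δ) (hδ : δ ≤ s/2) :
    Real.exp (s*δ/4) * Phibar s ≤ Phibar (s - δ) := by
  have hs0 : (0:ℝ) < s := by linarith
  have hsd : (0:ℝ) < s - δ := by linarith
  have hP : 0 < Phibar s := Phibar_pos hs0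
  by_cases hv : s*δ ≤ 8
  · -- linear regime
    have h1 : δ * phi s ≤ Phibar (s - δ) - Phibar s := by
      have := diff_lower (a := s - δ) (b := s) hsd.le (by linarith)
      linarith [this]
    have h2 : s * Phibar s ≤ phi s := by
      have := M1 hs0
      rw [le_div_iff₀ hs0] at this
      linarith [this]
    have h3 : (1 + s*δ) * Phibar s ≤ Phibar (s - δ) := by
      nlinarith [mul_le_mul_of_nonneg_left h2 hδ0]
    have h4 : Real.exp (s*δ/4) ≤ 1 + s*δ := lin_exp (by positivity) hv
    nlinarith
  · -- Mills regime
    push_neg at hv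
    have key : Real.exp (s*δ/4) * (phi s / s) ≤ (s-δ) * phi (s-δ) / (1 + (s-δ)^2) := by
      rw [phi_sub]
      have hE : Real.exp 4 * Real.exp (s*δ/4) ≤ Real.exp (s*δ - δ^2/2) := by
        rw [← Real.exp_add]
        apply Real.exp_le_exp.2
        nlinarith
      have hexp4 : (5:ℝ) ≤ Real.exp 4 := by
        nlinarith [Real.add_one_le_exp (4:ℝ)]
      rw [mul_div_assoc', div_le_div_iff₀ hs0 (by positivity : (0:ℝ) < 1 + (s-δ)^2)]
      have hphi : 0 < phi s := phi_pos s
      have hexpv : 0 < Real.exp (s*δ/4) := Real.exp_pos _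
      have h5 : 5 * Real.exp (s*δ/4) ≤ Real.exp (s*δ - δ^2/2) := by
        nlinarith [Real.exp_pos (s*δ/4)]
      have l1 : 1 + (s-δ)^2 ≤ 2*s^2 := by nlinarith
      have step1 : Real.exp (s*δ/4) * phi s * (1+(s-δ)^2)
          ≤ Real.exp (s*δ/4) * phi s * (2*s^2) :=
        mul_le_mul_of_nonneg_left l1 (mul_nonneg hexpv.le hphi.le)
      have q1 : (s/2) * (phi s * (5*Real.exp (s*δ/4))) * s
          ≤ (s-δ) * (phi s * Real.exp (s*δ-δ^2/2)) * s := by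
        refine mul_le_mul_of_nonneg_right ?_ hs0.le
        refine mul_le_mul (by linarith) (mul_le_mul_of_nonneg_left h5 hphi.le)
          (mul_nonneg hphi.le (by positivity)) hsd.le
      nlinarith [mul_pos (mul_pos hexpv hphi) (mul_pos hs0 hs0)]
    calc Real.exp (s*δ/4) * Phibar s ≤ Real.exp (s*δ/4) * (phi s / s) := by
          exact mul_le_mul_of_nonneg_left (M1 hs0) (Real.exp_pos _).le
      _ ≤ (s-δ) * phi (s-δ) / (1 + (s-δ)^2) := key
      _ ≤ Phibar (s - δ) := M2 hsd

lemma ratio_upper {s δ : ℝ} (hs : 1 ≤ s) (hδ0 : 0 ≤ δ) :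
    Phibar (s + δ) ≤ Real.exp (-(s*δ)/4) * Phibar s := by
  have hs0 : (0:ℝ) < s := by linarith
  have hsd : (0:ℝ) < s + δ := by linarith
  rw [show -(s*δ)/4 = -(s*δ/4) by ring, Real.exp_neg, inv_mul_eq_div,
    le_div_iff₀ (Real.exp_pos _)]
  by_cases hv : s*δ ≤ 8
  · -- linear regime
    have h1 := diff_lower (a := s) (b := s + δ) hs0.le (by linarith)
    have h2 : (s+δ) * Phibar (s+δ) ≤ phi (s+δ) := by
      have := M1 hsd
      rw [le_div_iff₀ hsd] at this
      linarith
    have h3 : (1 + s*δ) * Phibar (s+δ) ≤ Phibar s := by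
      nlinarith [mul_le_mul_of_nonneg_left h2 hδ0,
        mul_nonneg (mul_nonneg hδ0 hδ0) (Phibar_nonneg (s+δ))]
    have h4 : Real.exp (s*δ/4) ≤ 1 + s*δ := lin_exp (by positivity) hv
    nlinarith [Phibar_nonneg (s+δ)]
  · -- Mills regime
    push_neg at hv
    have hP' : Phibar (s+δ) ≤ phi s * Real.exp (-(s*δ) - δ^2/2) / s := by
      rw [← phi_add]
      calc Phibar (s+δ) ≤ phi (s+δ) / (s+δ) := M1 hsd
        _ ≤ phi (s+δ) / s := div_le_div_of_nonneg_left (phi_pos _).le hs0 (by linarith)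
    have hPl : phi s / (2*s) ≤ Phibar s := by
      refine le_trans ?_ (M2 hs0)
      rw [div_le_div_iff₀ (by positivity) (by positivity)]
      nlinarith [mul_nonneg (by nlinarith : (0:ℝ) ≤ s^2 - 1) (phi_pos s).le]
    have h7 : (7:ℝ) ≤ Real.exp 6 := by nlinarith [Real.add_one_le_exp (6:ℝ)]
    have h8 : Real.exp (-(s*δ) - δ^2/2) * 2 ≤ Real.exp (-(s*δ/4)) := by
      have e1 : Real.exp (-(s*δ) - δ^2/2)
          = Real.exp (-(s*δ/4)) * Real.exp (-(3*(s*δ))/4 - δ^2/2) := by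
        rw [← Real.exp_add]; ring_nf
      have e2 : Real.exp (-(3*(s*δ))/4 - δ^2/2) ≤ Real.exp (-6) :=
        Real.exp_le_exp.2 (by nlinarith)
      have e3 : Real.exp (-6) ≤ 1/2 := by
        rw [Real.exp_neg]
        rw [inv_le_comm₀ (Real.exp_pos _) (by norm_num)]
        linarith
      nlinarith [Real.exp_pos (-(s*δ/4)), Real.exp_pos (-(3*(s*δ))/4 - δ^2/2)]
    have key : phi s * Real.exp (-(s*δ) - δ^2/2) / s
        ≤ (Real.exp (-(s*δ/4)) * phi s / 2) / s := by
      gcongr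
      nlinarith [mul_le_mul_of_nonneg_left h8 (phi_pos s).le]
    have final : Phibar (s+δ) ≤ Real.exp (-(s*δ/4)) * Phibar s := by
      calc Phibar (s+δ) ≤ phi s * Real.exp (-(s*δ) - δ^2/2) / s := hP'
        _ ≤ (Real.exp (-(s*δ/4)) * phi s / 2) / s := key
        _ = Real.exp (-(s*δ/4)) * (phi s / (2*s)) := by ring
        _ ≤ Real.exp (-(s*δ/4)) * Phibar s :=
            mul_le_mul_of_nonneg_left hPl (Real.exp_pos _).le
    calc Phibar (s+δ) * Real.exp (s*δ/4)
        ≤ (Real.exp (-(s*δ/4)) * Phibar s) * Real.exp (s*δ/4) :=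
          mul_le_mul_of_nonneg_right final (Real.exp_pos _).le
      _ = Phibar s * (Real.exp (-(s*δ/4)) * Real.exp (s*δ/4)) := by ring
      _ = Phibar s := by rw [← Real.exp_add]; simp

/-- Gaussian tail comparison: for any `A > 0` (and `σ` bounded above and below by fixed
positive constants) there exist `c` and `ε > 0` such that for `σ√n ≤ z ≤ εn`,
`e^{A z³/n²} Φ̄(z/(σ√n)) ≤ Φ̄(z/(σ√n) - c z²/(σ n^{3/2}))` and
`e^{-A z³/n²} Φ̄(z/(σ√n)) ≥ Φ̄(z/(σ√n) + c z²/(σ n^{3/2}))`. -/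
theorem stmt16 (A K : ℝ) (hA : 0 < A) (hK : 1 ≤ K) :
    ∃ c : ℝ, 0 < c ∧ ∃ ε : ℝ, 0 < ε ∧
      ∀ σ : ℝ, 1 / K ≤ σ → σ ≤ K → ∀ n : ℕ, 1 ≤ n → ∀ z : ℝ,
        σ * Real.sqrt n ≤ z → z ≤ ε * n →
        (Real.exp (A * z ^ 3 / (n : ℝ) ^ 2) * Phibar (z / (σ * Real.sqrt n))
            ≤ Phibar (z / (σ * Real.sqrt n) - c * z ^ 2 / (σ * (n : ℝ) ^ ((3 : ℝ) / 2))))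
        ∧ (Real.exp (-A * z ^ 3 / (n : ℝ) ^ 2) * Phibar (z / (σ * Real.sqrt n))
            ≥ Phibar (z / (σ * Real.sqrt n) + c * z ^ 2 / (σ * (n : ℝ) ^ ((3 : ℝ) / 2)))) := by
  have hK0 : (0:ℝ) < K := by linarith
  refine ⟨4*A*K^2, by positivity, 1/(8*A*K^2), by positivity, ?_⟩
  intro σ hσ1 hσ2 n hn z hz1 hz2
  have hσ0 : 0 < σ := lt_of_lt_of_le (by positivity) hσ1
  have hn0 : (0:ℝ) < n := by exact_mod_cast hn
  have hsq : 0 < Real.sqrt n := Real.sqrt_pos.2 hn0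
  have hsq2 : Real.sqrt n ^ 2 = (n:ℝ) := Real.sq_sqrt hn0.le
  have hz0 : 0 < z := lt_of_lt_of_le (mul_pos hσ0 hsq) hz1
  have hn32 : (n:ℝ) ^ ((3:ℝ)/2) = n * Real.sqrt n := by
    rw [show (3:ℝ)/2 = 1 + 1/2 by norm_num, Real.rpow_add hn0, Real.rpow_one,
      Real.sqrt_eq_rpow]
  set s := z / (σ * Real.sqrt n) with hs_def
  set d := 4*A*K^2 * z^2 / (σ * (n:ℝ)^((3:ℝ)/2)) with hd_def
  have hs0 : 0 < s := div_pos hz0 (mul_pos hσ0 hsq)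
  have hs1 : 1 ≤ s := by
    rw [hs_def, le_div_iff₀ (mul_pos hσ0 hsq)]
    linarith
  have hd0 : 0 ≤ d := by
    rw [hd_def]
    have : (0:ℝ) < (n:ℝ)^((3:ℝ)/2) := Real.rpow_pos_of_pos hn0 _
    positivity
  have hd_eq : d = s * (4*A*K^2*z/(n:ℝ)) := by
    rw [hd_def, hs_def, hn32]
    field_simp
  have hd_le : d ≤ s/2 := by
    rw [hd_eq]
    have h1 : 4*A*K^2*z/(n:ℝ) ≤ 1/2 := by
      rw [div_le_iff₀ hn0]
      have : z ≤ 1/(8*A*K^2) * n := hz2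
      have hAK : (0:ℝ) < 8*A*K^2 := by positivity
      rw [div_mul_eq_mul_div, le_div_iff₀ hAK] at this
      nlinarith
    nlinarith
  have hs2 : s^2 = z^2/(σ^2 * n) := by
    rw [hs_def, div_pow, mul_pow, hsq2]
  have hsd_eq : s*d = z^2/(σ^2*(n:ℝ)) * (4*A*K^2*z/(n:ℝ)) := by
    rw [hd_eq, ← hs2]; ring
  have hA_le : A * z^3/(n:ℝ)^2 ≤ s*d/4 := by
    rw [hsd_eq]
    have e : (z^2/(σ^2*(n:ℝ))*(4*A*K^2*z/(n:ℝ)))/4 = A*K^2*z^3/(σ^2*(n:ℝ)^2) := by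
      field_simp
    rw [e, div_le_div_iff₀ (by positivity) (by positivity)]
    have hσK : σ^2 ≤ K^2 := by nlinarith
    have hz3 : 0 ≤ z^3 := by positivity
    nlinarith [mul_le_mul_of_nonneg_left hσK (by positivity : (0:ℝ) ≤ A*z^3*(n:ℝ)^2)]
  have hPnn : 0 ≤ Phibar s := Phibar_nonneg s
  constructor
  · have main1 := ratio_lower hs1 hd0 hd_le
    have hexp : Real.exp (A * z^3/(n:ℝ)^2) ≤ Real.exp (s*d/4) := Real.exp_le_exp.2 hA_le
    calc Real.exp (A * z^3/(n:ℝ)^2) * Phibar s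
        ≤ Real.exp (s*d/4) * Phibar s := mul_le_mul_of_nonneg_right hexp hPnn
      _ ≤ Phibar (s - d) := main1
  · have main2 := ratio_upper hs1 hd0
    have hexp : Real.exp (-(s*d)/4) ≤ Real.exp (-A * z^3/(n:ℝ)^2) := by
      apply Real.exp_le_exp.2
      have : -A * z^3/(n:ℝ)^2 = -(A * z^3/(n:ℝ)^2) := by ring
      rw [this]
      linarith
    calc Phibar (s + d) ≤ Real.exp (-(s*d)/4) * Phibar s := main2
      _ ≤ Real.exp (-A * z^3/(n:ℝ)^2) * Phibar s := mul_le_mul_of_nonneg_right hexp hPnn
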